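/- If M is a doubly stochastic matrix that is diagonalizable with all eigenvalues other than the eigenvalue 1 (with the uniform vector as eigenvector) having modulus strictly less than 1, and the eigenspace of 1 is one-dimensional, then for every probability vector P, the iterates Mⁿ·P converge to the uniform probability vector (1/n, ..., 1/n) as n → ∞. -/

import Mathlib

open Matrix Filter

/-- A doubly stochastic matrix that is diagonalizable over ℂ, whose eigenspace of the
eigenvalue 1 is spanned by the uniform vector and all of whose other eigenvalues have
modulus strictly less than 1, is mixing: `Mᵐ·P` converges to the uniform probability
vector for every probability vector `P`. -/
theorem doublyStochastic_mixing (n : ℕ) (hn : 0 < n) (M : Matrix (Fin n) (Fin n) ℝ)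
    (hMnonneg : ∀ i j, 0 ≤ M i j)
    (hrow : ∀ i, ∑ j, M i j = 1) (hcol : ∀ j, ∑ i, M i j = 1)
    (Mc : Matrix (Fin n) (Fin n) ℂ) (hMc : Mc = M.map (algebraMap ℝ ℂ))
    -- `M` is diagonalizable over ℂ
    (hdiag : ∃ Q : Matrix (Fin n) (Fin n) ℂ, IsUnit Q.det ∧ (Q⁻¹ * Mc * Q).IsDiag)
    -- the eigenspace of the eigenvalue 1 is one-dimensional, spanned by the uniform vector
    (hfix : ∀ v : Fin n → ℂ, Mc.mulVec v = v → ∃ c : ℂ, v = fun _ => c)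
    -- every eigenvalue other than 1 has modulus strictly less than 1
    (hgap : ∀ lam : ℂ, lam ≠ 1 → (∃ v : Fin n → ℂ, v ≠ 0 ∧ Mc.mulVec v = lam • v) →
      ‖lam‖ < 1)
    (P : Fin n → ℝ) (hPnonneg : ∀ i, 0 ≤ P i) (hPsum : ∑ i, P i = 1) :
    Tendsto (fun m : ℕ => (M ^ m).mulVec P) atTop (nhds fun _ => (1 : ℝ) / n) := by
  obtain ⟨Q, hQdet, hQdiag⟩ := hdiag
  have hQ1 : Q * Q⁻¹ = 1 := Matrix.mul_nonsing_inv Q hQdet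
  have hQ2 : Q⁻¹ * Q = 1 := Matrix.nonsing_inv_mul Q hQdet
  set D : Matrix (Fin n) (Fin n) ℂ := Q⁻¹ * Mc * Q with hD
  set d : Fin n → ℂ := fun k => D k k with hd
  have hDdiag : Matrix.diagonal d = D := hQdiag.diagonal_diag
  have hMcD : Mc = Q * D * Q⁻¹ := by
    rw [hD]
    calc Mc = (Q * Q⁻¹) * Mc * (Q * Q⁻¹) := by rw [hQ1]; simp
    _ = Q * (Q⁻¹ * Mc * Q) * Q⁻¹ := by noncomm_ring
  have hMcQ : Mc * Q = Q * D := by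
    rw [hMcD, Matrix.mul_assoc, hQ2, Matrix.mul_one]
  have hpow : ∀ m : ℕ, Mc ^ m = Q * (D ^ m) * Q⁻¹ := by
    intro m
    induction m with
    | zero => simp [hQ1]
    | succ m ih =>
      rw [pow_succ, ih, hMcD, pow_succ]
      calc Q * D ^ m * Q⁻¹ * (Q * D * Q⁻¹)
          = Q * D ^ m * (Q⁻¹ * Q) * D * Q⁻¹ := by noncomm_ring
        _ = Q * (D ^ m * D) * Q⁻¹ := by rw [hQ2]; noncomm_ring
  -- each diagonal entry is an eigenvalue
  have heig : ∀ k, d k = 1 ∨ ‖d k‖ < 1 := by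
    intro k
    by_cases h1 : d k = 1
    · exact Or.inl h1
    · refine Or.inr (hgap (d k) h1 ⟨fun i => Q i k, ?_, ?_⟩)
      · intro hv
        have h0 : (Q⁻¹ * Q) k k = 1 := by rw [hQ2]; simp
        rw [Matrix.mul_apply] at h0
        have : ∀ l, Q⁻¹ k l * Q l k = 0 := by
          intro l
          have : Q l k = 0 := congrFun hv l
          simp [this]
        simp [this] at h0
      · funext i
        have : (Mc * Q) i k = (Q * D) i k := by rw [hMcQ]
        rw [← hDdiag, Matrix.mul_diagonal] at this
        simpa [Matrix.mulVec, dotProduct, Matrix.mul_apply, mul_comm] using this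
  -- the limiting diagonal
  set l : Fin n → ℂ := fun k => if d k = 1 then 1 else 0 with hl
  have hconv : ∀ k, Tendsto (fun m : ℕ => d k ^ m) atTop (nhds (l k)) := by
    intro k
    rcases heig k with h | h
    · simp [hl, h]
    · have hne : ¬ d k = 1 := by
        intro h1; rw [h1] at h; simp at h
      simp only [hl, hne, if_false]
      exact tendsto_pow_atTop_nhds_zero_of_norm_lt_one h
  set L : Matrix (Fin n) (Fin n) ℂ := Q * Matrix.diagonal l * Q⁻¹ with hL
  -- entrywise convergence of Mc ^ m to L
  have hentry : ∀ i j, Tendsto (fun m : ℕ => (Mc ^ m) i j) atTop (nhds (L i j)) := by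
    intro i j
    have hrw : ∀ m : ℕ, (Mc ^ m) i j = ∑ k, Q i k * d k ^ m * Q⁻¹ k j := by
      intro m
      rw [hpow m, ← hDdiag, Matrix.diagonal_pow, Matrix.mul_apply]
      congr 1; funext k
      rw [Matrix.mul_diagonal]
      simp [Pi.pow_apply]
    have hrwL : L i j = ∑ k, Q i k * l k * Q⁻¹ k j := by
      rw [hL, Matrix.mul_apply]
      congr 1; funext k
      rw [Matrix.mul_diagonal]
    simp only [hrw, hrwL]
    exact tendsto_finset_sum _ fun k _ =>
      ((tendsto_const_nhds.mul (hconv k)).mul tendsto_const_nhds)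
  -- Mc * L = L
  have hfixL : Mc * L = L := by
    have hdl : (fun k => d k * l k) = l := by
      funext k
      by_cases h1 : d k = 1 <;> simp [hl, h1]
    rw [hL, hMcD]
    calc Q * D * Q⁻¹ * (Q * Matrix.diagonal l * Q⁻¹)
        = Q * D * (Q⁻¹ * Q) * Matrix.diagonal l * Q⁻¹ := by noncomm_ring
      _ = Q * (D * Matrix.diagonal l) * Q⁻¹ := by rw [hQ2]; noncomm_ring
      _ = Q * Matrix.diagonal l * Q⁻¹ := by
          rw [← hDdiag, Matrix.diagonal_mul_diagonal]
          simp only [hdl]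
  -- column sums of Mc ^ m are 1
  have hcolc : ∀ j, ∑ k, Mc k j = 1 := by
    intro j
    rw [hMc]
    simp only [Matrix.map_apply]
    rw [← map_sum]
    rw [hcol j]
    simp
  have hcolpow : ∀ (m : ℕ) j, ∑ i, (Mc ^ m) i j = 1 := by
    intro m
    induction m with
    | zero => intro j; simp [Matrix.one_apply, Finset.sum_ite_eq]
    | succ m ih =>
      intro j
      rw [pow_succ]
      have : ∀ i, (Mc ^ m * Mc) i j = ∑ k, (Mc ^ m) i k * Mc k j := fun i =>
        Matrix.mul_apply
      simp only [this]
      rw [Finset.sum_comm]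
      have : ∀ k, ∑ i, (Mc ^ m) i k * Mc k j = Mc k j := by
        intro k
        rw [← Finset.sum_mul, ih k, one_mul]
      simp only [this]
      exact hcolc j
  -- columns of L are constant equal to 1/n
  have hLval : ∀ i j, L i j = 1 / (n : ℂ) := by
    intro i j
    have hfp : Mc.mulVec (fun i => L i j) = fun i => L i j := by
      funext i
      have : (Mc * L) i j = L i j := by rw [hfixL]
      rw [Matrix.mul_apply] at this
      simpa [Matrix.mulVec, dotProduct] using this
    obtain ⟨c, hc⟩ := hfix (fun i => L i j) hfp
    · have hsum : ∑ i, L i j = 1 := by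
        have h1 : Tendsto (fun m : ℕ => ∑ i, (Mc ^ m) i j) atTop (nhds (∑ i, L i j)) :=
          tendsto_finset_sum _ fun i _ => hentry i j
        have h2 : Tendsto (fun m : ℕ => ∑ i, (Mc ^ m) i j) atTop (nhds 1) := by
          simp only [hcolpow]; exact tendsto_const_nhds
        exact tendsto_nhds_unique h1 h2
      have hn' : (n : ℂ) ≠ 0 := by
        exact_mod_cast Nat.cast_ne_zero.mpr hn.ne'
      have : (n : ℂ) * c = 1 := by
        have : ∑ i : Fin n, L i j = ∑ _i : Fin n, c :=
          Finset.sum_congr rfl fun i _ => congrFun hc i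
        rw [this, Finset.sum_const, Finset.card_univ, Fintype.card_fin] at hsum
        simpa [nsmul_eq_mul] using hsum
      have hc1 : c = 1 / (n : ℂ) := by field_simp at this ⊢; linear_combination this
      rw [congrFun hc i, hc1]
  -- relate real and complex powers
  have hmap : ∀ m : ℕ, (Mc ^ m) = (M ^ m).map (algebraMap ℝ ℂ) := by
    intro m
    rw [hMc, ← RingHom.mapMatrix_apply, ← map_pow, RingHom.mapMatrix_apply]
  rw [tendsto_pi_nhds]
  intro i
  have hcomplex : Tendsto (fun m : ℕ => ∑ j, (Mc ^ m) i j * (P j : ℂ)) atTop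
      (nhds (((1 : ℝ) / n : ℝ) : ℂ)) := by
    have hlim : (∑ j, L i j * (P j : ℂ)) = (((1 : ℝ) / n : ℝ) : ℂ) := by
      simp only [hLval]
      rw [← Finset.mul_sum]
      have : (∑ j, (P j : ℂ)) = 1 := by
        rw [← Complex.ofReal_sum, hPsum, Complex.ofReal_one]
      rw [this, mul_one]
      push_cast
      ring
    rw [← hlim]
    exact tendsto_finset_sum _ fun j _ => (hentry i j).mul tendsto_const_nhds
  have hre : ∀ m : ℕ, (∑ j, (Mc ^ m) i j * (P j : ℂ)) = (((M ^ m).mulVec P i : ℝ) : ℂ) := by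
    intro m
    rw [hmap m]
    simp only [Matrix.map_apply, Matrix.mulVec, dotProduct]
    push_cast
    rfl
  have := (Complex.continuous_re.tendsto _).comp hcomplex
  simp only [Function.comp_def, hre, Complex.ofReal_re] at this
  convert this using 2
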